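/- Let Γ = (N, {a}, Σ, P, S) be a hyperedge replacement grammar over the one-letter terminal alphabet {a} with type(a) = {1,2}, and let A ∈ N. Suppose (i) there is a derivation S• ⇒*_Γ G in which exactly one hyperedge e of G is labeled A and all other hyperedges of G are labeled a, and (ii) A• ⇒*_Γ H for some a-labeled hypergraph H (with type(H) = type(A)) that has a bad node or an undirected cycle. Then G[e/H] ∈ L(Γ) and G[e/H] is not (isomorphic to) a string graph; in particular, Γ is not string-generating. -/

import Mathlib

namespace HRGPaper

universe u

/-- A hypergraph over a `Finset ℕ`-typed alphabet `C` with typing function `tc`. -/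
structure Hypergraph (C : Type u) (tc : C → Finset ℕ) : Type (max u 1) where
  V : Type
  E : Type
  finV : Finite V
  finE : Finite E
  lab : E → C
  att : (e : E) → (σ : ℕ) → σ ∈ tc (lab e) → V
  extType : Finset ℕ
  ext : (σ : ℕ) → σ ∈ extType → V

variable {C : Type u} {tc : C → Finset ℕ}

/-- An isomorphism of hypergraphs. -/
structure HIso (H K : Hypergraph C tc) where
  vE : H.V ≃ K.V
  eE : H.E ≃ K.E
  lab_eq : ∀ e, K.lab (eE e) = H.lab e
  att_eq : ∀ (e : H.E) (σ : ℕ) (h : σ ∈ tc (H.lab e)) (h' : σ ∈ tc (K.lab (eE e))),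
    K.att (eE e) σ h' = vE (H.att e σ h)
  extType_eq : K.extType = H.extType
  ext_eq : ∀ (σ : ℕ) (h : σ ∈ H.extType) (h' : σ ∈ K.extType),
    K.ext σ h' = vE (H.ext σ h)

/-- Two hypergraphs are isomorphic. -/
def IsIso (H K : Hypergraph C tc) : Prop := Nonempty (HIso H K)

/-- The handle `c•` of a label `c`. -/
def handle (c : C) : Hypergraph C tc where
  V := {σ : ℕ // σ ∈ tc c}
  E := PUnit
  finV := inferInstance
  finE := inferInstance
  lab := fun _ => c
  att := fun _ σ h => ⟨σ, h⟩
  extType := tc c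
  ext := fun σ h => ⟨σ, h⟩

/-- The gluing relation used for hyperedge replacement: the attachment node of `e`
with selector `σ` gets identified with the external node of `K` with selector `σ`. -/
def glueRel (H : Hypergraph C tc) (e : H.E) (K : Hypergraph C tc) :
    (H.V ⊕ K.V) → (H.V ⊕ K.V) → Prop := fun x y =>
  ∃ (σ : ℕ) (h : σ ∈ tc (H.lab e)) (h' : σ ∈ K.extType),
    x = Sum.inl (H.att e σ h) ∧ y = Sum.inr (K.ext σ h')

/-- The replacement `H[e/K]` of the hyperedge `e` in `H` by the hypergraph `K`. -/
def replace (H : Hypergraph C tc) (e : H.E) (K : Hypergraph C tc) : Hypergraph C tc where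
  V := Quot (glueRel H e K)
  E := {e' : H.E // e' ≠ e} ⊕ K.E
  finV := by haveI := H.finV; haveI := K.finV; infer_instance
  finE := by haveI := H.finE; haveI := K.finE; infer_instance
  lab := Sum.elim (fun e' => H.lab e'.1) K.lab
  att := fun e' => Sum.rec (motive := fun e' => (σ : ℕ) →
      σ ∈ tc (Sum.elim (fun e'' : {e' : H.E // e' ≠ e} => H.lab e''.1) K.lab e') →
      Quot (glueRel H e K))
    (fun e₀ σ h => Quot.mk _ (Sum.inl (H.att e₀.1 σ h)))
    (fun eK σ h => Quot.mk _ (Sum.inr (K.att eK σ h))) e'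
  extType := H.extType
  ext := fun σ h => Quot.mk _ (Sum.inl (H.ext σ h))

/-- A hyperedge replacement grammar over the typed alphabet `C`; `isNT` singles out the
nonterminal labels, the remaining labels being terminal. -/
structure HRG (C : Type u) (tc : C → Finset ℕ) where
  isNT : C → Prop
  finC : Finite C
  P : Set (C × Hypergraph C tc)
  finP : P.Finite
  lhs_nt : ∀ p ∈ P, isNT p.1
  rhs_type : ∀ p ∈ P, p.2.extType = tc p.1
  S : C
  S_nt : isNT S

/-- One derivation step of an HRG: replace a hyperedge labeled by the left-hand side of a
production with the right-hand side of that production. -/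
def Step (Γ : HRG C tc) (H H' : Hypergraph C tc) : Prop :=
  ∃ (e : H.E) (p : C × Hypergraph C tc), p ∈ Γ.P ∧ H.lab e = p.1 ∧ H' = replace H e p.2

/-- The derivability relation `⇒*` of an HRG. -/
def Derives (Γ : HRG C tc) : Hypergraph C tc → Hypergraph C tc → Prop :=
  Relation.ReflTransGen (Step Γ)

/-- Derivability in exactly `k` steps. -/
inductive DerivesIn (Γ : HRG C tc) : ℕ → Hypergraph C tc → Hypergraph C tc → Prop
  | refl (H : Hypergraph C tc) : DerivesIn Γ 0 H H
  | tail {k H H' H''} : DerivesIn Γ k H H' → Step Γ H' H'' → DerivesIn Γ (k + 1) H H''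

/-- The language of an HRG: all hypergraphs with terminal labels only that are isomorphic to a
hypergraph derivable from the handle of the start symbol (i.e. the language is considered
up to isomorphism). -/
def Lang (Γ : HRG C tc) : Set (Hypergraph C tc) :=
  {H | (∀ e : H.E, ¬ Γ.isNT (H.lab e)) ∧ ∃ H', Derives Γ (handle Γ.S) H' ∧ IsIso H' H}

/-- The string graph of the word `w`. -/
def SG (w : List C) : Hypergraph C tc where
  V := Fin (w.length + 1)
  E := Fin w.length
  finV := inferInstance
  finE := inferInstance
  lab := fun i => w.get i
  att := fun i σ _ => if σ = 1 then i.castSucc else i.succ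
  extType := {1, 2}
  ext := fun σ _ => if σ = 1 then 0 else Fin.last w.length

/-- An HRG is string-generating if every hypergraph of its language is a string graph. -/
def IsStringGenerating (Γ : HRG C tc) : Prop :=
  ∀ H ∈ Lang Γ, ∃ w : List C, IsIso H (SG w)

/-- A hypergraph is repetition-free if its external map and all its attachment maps
are injective. -/
def RepFree (H : Hypergraph C tc) : Prop :=
  (∀ (σ₁ σ₂ : ℕ) (h₁ : σ₁ ∈ H.extType) (h₂ : σ₂ ∈ H.extType),
      H.ext σ₁ h₁ = H.ext σ₂ h₂ → σ₁ = σ₂) ∧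
  (∀ (e : H.E) (σ₁ σ₂ : ℕ) (h₁ : σ₁ ∈ tc (H.lab e)) (h₂ : σ₂ ∈ tc (H.lab e)),
      H.att e σ₁ h₁ = H.att e σ₂ h₂ → σ₁ = σ₂)

/-- An HRG is repetition-free if all right-hand sides of its productions are repetition-free. -/
def RepFreeGrammar (Γ : HRG C tc) : Prop := ∀ p ∈ Γ.P, RepFree p.2

/-- The size of a hypergraph: number of nodes plus number of hyperedges plus the total number
of attachment nodes of its hyperedges. -/
noncomputable def hgSize (D : Hypergraph C tc) : ℕ :=
  Nat.card D.V + Nat.card D.E + Nat.card ((e : D.E) × {σ : ℕ // σ ∈ tc (D.lab e)})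

/-- The size of a production. -/
noncomputable def prodSize (p : C × Hypergraph C tc) : ℕ :=
  (tc p.1).card + hgSize p.2

/-- The size of an HRG. -/
noncomputable def hrgSize (Γ : HRG C tc) : ℕ :=
  ∑ p ∈ Γ.finP.toFinset, prodSize p

/-- The hypergraph `F(X, f)`: nodes `[n] = {1,…,n}`, a single hyperedge labeled `X`
whose attachment node for selector `j` is `f j`, and all nodes external via `ext j = j`. -/
def Fgraph (X : C) (n : ℕ) (hX : tc X = Finset.Icc 1 n) (f : ℕ → ℕ)
    (hf : ∀ j ∈ Finset.Icc 1 n, f j ∈ Finset.Icc 1 n) : Hypergraph C tc where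
  V := {j : ℕ // j ∈ Finset.Icc 1 n}
  E := PUnit
  finV := inferInstanceAs (Finite ↥(Finset.Icc 1 n))
  finE := inferInstance
  lab := fun _ => X
  att := fun _ σ h => ⟨f σ, hf σ (hX ▸ h)⟩
  extType := Finset.Icc 1 n
  ext := fun σ h => ⟨σ, h⟩

/-- A node is external if it is in the range of the external map. -/
def IsExternal (H : Hypergraph C tc) (v : H.V) : Prop :=
  ∃ (σ : ℕ) (h : σ ∈ H.extType), H.ext σ h = v

/-- The in-degree of a node of an (`a`-labeled) hypergraph: the number of edges whose
attachment node with selector `2` is `v`. -/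
noncomputable def inDeg {C : Type u} {tc : C → Finset ℕ} (H : Hypergraph C tc) (v : H.V) : ℕ :=
  Nat.card {e : H.E // ∃ h : 2 ∈ tc (H.lab e), H.att e 2 h = v}

/-- The out-degree of a node of an (`a`-labeled) hypergraph: the number of edges whose
attachment node with selector `1` is `v`. -/
noncomputable def outDeg {C : Type u} {tc : C → Finset ℕ} (H : Hypergraph C tc) (v : H.V) : ℕ :=
  Nat.card {e : H.E // ∃ h : 1 ∈ tc (H.lab e), H.att e 1 h = v}

/-- A node is bad if it is not external and its in-degree or out-degree differs from `1`. -/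
def BadNode {C : Type u} {tc : C → Finset ℕ} (H : Hypergraph C tc) (v : H.V) : Prop :=
  ¬ IsExternal H v ∧ (inDeg H v ≠ 1 ∨ outDeg H v ≠ 1)

/-- `H` has an undirected cycle `v₁, e₁, …, v_l, e_l`: the `vᵢ` are distinct nodes, the `eᵢ`
are distinct edges, and the unordered pair of attachment nodes of `eᵢ` is `{vᵢ, vᵢ₊₁}`
(indices cyclically). -/
def HasUndirectedCycle {C : Type u} {tc : C → Finset ℕ} (H : Hypergraph C tc) : Prop :=
  ∃ (l : ℕ) (hl : 0 < l) (v : Fin l → H.V) (e : Fin l → H.E),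
    Function.Injective v ∧ Function.Injective e ∧
    ∀ i : Fin l, ∃ (h₁ : 1 ∈ tc (H.lab (e i))) (h₂ : 2 ∈ tc (H.lab (e i))),
      ({H.att (e i) 1 h₁, H.att (e i) 2 h₂} : Set H.V)
        = {v i, v ⟨(i.1 + 1) % l, Nat.mod_lt _ hl⟩}

/-- A hypergraph is bad if it has a bad node or an undirected cycle. -/
def Bad {C : Type u} {tc : C → Finset ℕ} (H : Hypergraph C tc) : Prop :=
  (∃ v : H.V, BadNode H v) ∨ HasUndirectedCycle H

/-- A hypergraph is good if it is not bad. -/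
def Good {C : Type u} {tc : C → Finset ℕ} (H : Hypergraph C tc) : Prop := ¬ Bad H
section Aux

theorem att_congr (K : Hypergraph C tc) {e₁ e₂ : K.E} (h : e₁ = e₂) (σ : ℕ)
    (h₁ : σ ∈ tc (K.lab e₁)) (h₂ : σ ∈ tc (K.lab e₂)) : K.att e₁ σ h₁ = K.att e₂ σ h₂ := by
  subst h; rfl

def HIso.trans {H K L : Hypergraph C tc} (φ : HIso H K) (ψ : HIso K L) : HIso H L where
  vE := φ.vE.trans ψ.vE
  eE := φ.eE.trans ψ.eE
  lab_eq e := by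
    show L.lab (ψ.eE (φ.eE e)) = H.lab e
    rw [ψ.lab_eq, φ.lab_eq]
  att_eq e σ h h' := by
    have hK : σ ∈ tc (K.lab (φ.eE e)) := by rw [φ.lab_eq]; exact h
    show L.att (ψ.eE (φ.eE e)) σ h' = ψ.vE (φ.vE (H.att e σ h))
    rw [ψ.att_eq (φ.eE e) σ hK h', φ.att_eq e σ h hK]
  extType_eq := by rw [ψ.extType_eq, φ.extType_eq]
  ext_eq σ h h' := by
    have hK : σ ∈ K.extType := by rw [φ.extType_eq]; exact h
    show L.ext σ h' = ψ.vE (φ.vE (H.ext σ h))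
    rw [ψ.ext_eq σ hK h', φ.ext_eq σ h hK]

open Classical in
noncomputable def replaceHandle (G : Hypergraph C tc) (e : G.E) :
    HIso G (replace G e (handle (G.lab e))) where
  vE := {
    toFun := fun v => Quot.mk _ (Sum.inl v)
    invFun := Quot.lift (Sum.elim id (fun s => G.att e s.1 s.2)) (by
      rintro x y ⟨σ, h, h', rfl, rfl⟩
      rfl)
    left_inv := fun v => rfl
    right_inv := by
      apply Quot.ind
      rintro (v | s)
      · rfl
      · exact (Quot.sound ⟨s.1, s.2, s.2, rfl, rfl⟩)
  }
  eE := {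
    toFun := fun e' => if h : e' = e then Sum.inr PUnit.unit else Sum.inl ⟨e', h⟩
    invFun := Sum.elim Subtype.val (fun _ => e)
    left_inv := fun e' => by by_cases h : e' = e <;> simp [h] <;> rfl
    right_inv := by
      rintro (⟨e', h⟩ | u)
      · simp [h]; rfl
      · cases u; exact dif_pos rfl
  }
  lab_eq := fun e' => by
    show (replace G e (handle (G.lab e))).lab
        (if h : e' = e then Sum.inr PUnit.unit else Sum.inl ⟨e', h⟩) = G.lab e'
    by_cases h : e' = e
    · refine (congrArg (replace G e (handle (G.lab e))).lab (dif_pos h : _ = (Sum.inr PUnit.unit : (replace G e (handle (G.lab e))).E))).trans ?_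
      exact congrArg G.lab h.symm
    · refine (congrArg (replace G e (handle (G.lab e))).lab (dif_neg h : _ = (Sum.inl ⟨e', h⟩ : (replace G e (handle (G.lab e))).E))).trans ?_
      rfl
  att_eq := fun e' σ h h' => by
    show (replace G e (handle (G.lab e))).att
        (if hx : e' = e then Sum.inr PUnit.unit else Sum.inl ⟨e', hx⟩) σ h'
      = Quot.mk _ (Sum.inl (G.att e' σ h))
    by_cases he : e' = e
    · subst he
      have hd : (if hx : e' = e' then (Sum.inr PUnit.unit : {x : G.E // x ≠ e'} ⊕ PUnit)
          else Sum.inl ⟨e', hx⟩) = Sum.inr PUnit.unit := dif_pos rfl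
      refine (att_congr _ hd σ h' ?_).trans ?_
      · exact h
      exact (Quot.sound (⟨σ, h, h, rfl, rfl⟩ :
        glueRel G e' (handle (G.lab e')) (Sum.inl (G.att e' σ h)) (Sum.inr ⟨σ, h⟩))).symm
    · have hd : (if hx : e' = e then (Sum.inr PUnit.unit : {x : G.E // x ≠ e} ⊕ PUnit)
          else Sum.inl ⟨e', hx⟩) = Sum.inl ⟨e', he⟩ := dif_neg he
      have h2 : σ ∈ tc ((replace G e (handle (G.lab e))).lab
          (Sum.inl (⟨e', he⟩ : {x : G.E // x ≠ e}))) := h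
      exact att_congr _ hd σ h' h2
  extType_eq := rfl
  ext_eq := fun σ h h' => rfl

end Aux
section Aux2

noncomputable def replaceCongr {K L : Hypergraph C tc} (φ : HIso K L) (e : K.E)
    (D : Hypergraph C tc) : HIso (replace K e D) (replace L (φ.eE e) D) where
  vE := Quot.congr (Equiv.sumCongr φ.vE (Equiv.refl D.V)) (by
    intro x y
    constructor
    · rintro ⟨σ, h, h', rfl, rfl⟩
      have hL : σ ∈ tc (L.lab (φ.eE e)) := by rw [φ.lab_eq]; exact h
      exact ⟨σ, hL, h', by simp [φ.att_eq e σ h hL], by simp⟩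
    · rintro ⟨σ, hL, h', hx, hy⟩
      have h : σ ∈ tc (K.lab e) := by rw [← φ.lab_eq e]; exact hL
      obtain ⟨xv, rfl⟩ : ∃ xv, x = Sum.inl xv := by
        cases x with
        | inl xv => exact ⟨xv, rfl⟩
        | inr d => simp at hx
      obtain ⟨yd, rfl⟩ : ∃ yd, y = Sum.inr yd := by
        cases y with
        | inl yv => simp at hy
        | inr yd => exact ⟨yd, rfl⟩
      simp only [Equiv.sumCongr_apply, Sum.map_inl, Sum.map_inr, Equiv.refl_apply,
        Sum.inl.injEq, Sum.inr.injEq] at hx hy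
      have hxv : xv = K.att e σ h := by
        apply φ.vE.injective
        rw [hx, φ.att_eq e σ h hL]
      exact ⟨σ, h, h', by rw [hxv], by rw [hy]⟩)
  eE := Equiv.sumCongr (Equiv.subtypeEquiv φ.eE (fun e' => by simp)) (Equiv.refl D.E)
  lab_eq := by
    rintro (⟨e', he'⟩ | d)
    · exact φ.lab_eq e'
    · rfl
  att_eq := by
    rintro (⟨e', he'⟩ | d) σ h h'
    · show Quot.mk _ (Sum.inl (L.att (φ.eE e') σ h'))
        = Quot.mk _ (Sum.inl (φ.vE (K.att e' σ h)))
      rw [φ.att_eq e' σ h h']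
    · rfl
  extType_eq := φ.extType_eq
  ext_eq := fun σ h h' => by
    show Quot.mk _ (Sum.inl (L.ext σ h')) = Quot.mk _ (Sum.inl (φ.vE (K.ext σ h)))
    rw [φ.ext_eq σ h h']

end Aux2
section Aux3

noncomputable def replaceAssoc (G : Hypergraph C tc) (e : G.E) (H : Hypergraph C tc)
    (e₀ : H.E) (D : Hypergraph C tc) :
    HIso (replace (replace G e H) (Sum.inr e₀) D) (replace G e (replace H e₀ D)) where
  vE := {
    toFun := Quot.lift
      (Sum.elim
        (Quot.lift
          (Sum.elim (fun v => Quot.mk _ (Sum.inl v))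
                    (fun hv => Quot.mk _ (Sum.inr (Quot.mk _ (Sum.inl hv)))))
          (by rintro x y ⟨σ, h, h', rfl, rfl⟩
              exact Quot.sound ⟨σ, h, h', rfl, rfl⟩))
        (fun d => Quot.mk _ (Sum.inr (Quot.mk _ (Sum.inr d)))))
      (by rintro x y ⟨σ, h, h', rfl, rfl⟩
          exact congrArg (Quot.mk _) (congrArg Sum.inr (Quot.sound ⟨σ, h, h', rfl, rfl⟩)))
    invFun := Quot.lift
      (Sum.elim (fun v => Quot.mk _ (Sum.inl (Quot.mk _ (Sum.inl v))))
        (Quot.lift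
          (Sum.elim (fun hv => Quot.mk _ (Sum.inl (Quot.mk _ (Sum.inr hv))))
                    (fun d => Quot.mk _ (Sum.inr d)))
          (by rintro x y ⟨σ, h, h', rfl, rfl⟩
              exact Quot.sound ⟨σ, h, h', rfl, rfl⟩)))
      (by rintro x y ⟨σ, h, h', rfl, rfl⟩
          exact congrArg (Quot.mk _) (congrArg Sum.inl (Quot.sound ⟨σ, h, h', rfl, rfl⟩)))
    left_inv := by
      apply Quot.ind
      rintro (q | d)
      · induction q using Quot.ind with
        | _ x => rcases x with v | hv <;> rfl
      · rfl
    right_inv := by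
      apply Quot.ind
      rintro (v | q)
      · rfl
      · induction q using Quot.ind with
        | _ x => rcases x with hv | d <;> rfl
  }
  eE := {
    toFun := fun x => match x with
      | Sum.inl ⟨Sum.inl e', _⟩ => Sum.inl e'
      | Sum.inl ⟨Sum.inr h', hne⟩ => Sum.inr (Sum.inl ⟨h', fun hh => hne (by rw [hh])⟩)
      | Sum.inr d => Sum.inr (Sum.inr d)
    invFun := fun x => match x with
      | Sum.inl e' => Sum.inl ⟨Sum.inl e', fun hh => Sum.inl_ne_inr hh⟩
      | Sum.inr (Sum.inl ⟨h', hne⟩) => Sum.inl ⟨Sum.inr h', fun hh => hne (Sum.inr.inj hh)⟩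
      | Sum.inr (Sum.inr d) => Sum.inr d
    left_inv := by rintro (⟨e' | h', hne⟩ | d) <;> rfl
    right_inv := by rintro (e' | ⟨h', hne⟩ | d) <;> rfl
  }
  lab_eq := by rintro (⟨e' | h', hne⟩ | d) <;> rfl
  att_eq := by rintro (⟨e' | h', hne⟩ | d) σ h h' <;> rfl
  extType_eq := rfl
  ext_eq := fun σ h h' => rfl

end Aux3
section Aux4

theorem derive_replace (Γ : HRG C tc) {A : C} {H : Hypergraph C tc}
    (hH : Derives Γ (handle A) H) :
    ∀ (G : Hypergraph C tc) (e : G.E), G.lab e = A →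
      ∃ K, Derives Γ G K ∧ IsIso K (replace G e H) := by
  induction hH with
  | refl =>
    intro G e he
    subst he
    exact ⟨G, Relation.ReflTransGen.refl, ⟨replaceHandle G e⟩⟩
  | tail hd st ih =>
    rename_i H' H''
    intro G e he
    obtain ⟨K, hGK, ⟨φ⟩⟩ := ih G e he
    obtain ⟨e₀, p, hp, hlab, rfl⟩ := st
    set f₀ := φ.eE.symm (Sum.inr e₀) with hf₀def
    have hf₀ : φ.eE f₀ = Sum.inr e₀ := Equiv.apply_symm_apply _ _
    have hf₀lab : K.lab f₀ = p.1 := by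
      have h1 := φ.lab_eq f₀
      rw [hf₀] at h1
      rw [← h1]
      exact hlab
    refine ⟨replace K f₀ p.2, hGK.tail ⟨f₀, p, hp, hf₀lab, rfl⟩, ?_⟩
    have ψ := replaceCongr φ f₀ p.2
    rw [hf₀] at ψ
    exact ⟨ψ.trans (replaceAssoc G e H' e₀ p.2)⟩

end Aux4
section Aux5

variable {G : Hypergraph C tc} {e : G.E} {H : Hypergraph C tc}

theorem eqvGen_glue {x y : G.V ⊕ H.V}
    (h : Relation.EqvGen (glueRel G e H) x y) :
    x = y ∨
      (((∃ σ hσ, x = Sum.inl (G.att e σ hσ)) ∨ (∃ σ hσ, x = Sum.inr (H.ext σ hσ))) ∧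
       ((∃ σ hσ, y = Sum.inl (G.att e σ hσ)) ∨ (∃ σ hσ, y = Sum.inr (H.ext σ hσ)))) := by
  induction h with
  | rel x y hr =>
    obtain ⟨σ, h1, h2, rfl, rfl⟩ := hr
    exact Or.inr ⟨Or.inl ⟨σ, h1, rfl⟩, Or.inr ⟨σ, h2, rfl⟩⟩
  | refl x => exact Or.inl rfl
  | symm x y _ ih =>
    rcases ih with rfl | ⟨h1, h2⟩
    · exact Or.inl rfl
    · exact Or.inr ⟨h2, h1⟩
  | trans x y z _ _ ih1 ih2 =>
    rcases ih1 with rfl | ⟨h1, h2⟩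
    · exact ih2
    · rcases ih2 with rfl | ⟨h3, h4⟩
      · exact Or.inr ⟨h1, h2⟩
      · exact Or.inr ⟨h1, h4⟩

theorem glue_inr_eq {v : H.V} (hv : ¬ IsExternal H v) {x : G.V ⊕ H.V}
    (hx : Quot.mk (glueRel G e H) (Sum.inr v) = Quot.mk _ x) : x = Sum.inr v := by
  rw [Quot.eq] at hx
  rcases eqvGen_glue hx with h | ⟨h1, _⟩
  · exact h.symm
  · exfalso
    rcases h1 with ⟨σ, hσ, h⟩ | ⟨σ, hσ, h⟩
    · exact Sum.inr_ne_inl h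
    · exact hv ⟨σ, hσ, (Sum.inr.inj h).symm⟩

theorem glue_inr_ne_inl {v : H.V} (hv : ¬ IsExternal H v) (u : G.V) :
    Quot.mk (glueRel G e H) (Sum.inr v) ≠ Quot.mk _ (Sum.inl u) := by
  intro h
  exact Sum.inl_ne_inr (glue_inr_eq hv h)

theorem replace_not_external {v : H.V} (hv : ¬ IsExternal H v) :
    ¬ IsExternal (replace G e H) (Quot.mk _ (Sum.inr v)) := by
  rintro ⟨σ, h, hext⟩
  exact glue_inr_ne_inl hv (G.ext σ h) hext.symm

theorem HIso.not_external {X Y : Hypergraph C tc} (ψ : HIso X Y) {v : X.V}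
    (h : ¬ IsExternal X v) : ¬ IsExternal Y (ψ.vE v) := by
  rintro ⟨σ, hσ, he⟩
  have hσ' : σ ∈ X.extType := ψ.extType_eq ▸ hσ
  rw [ψ.ext_eq σ hσ' hσ] at he
  exact h ⟨σ, hσ', ψ.vE.injective he⟩

/-- Transport of the number of `σ`-attached edges across the replacement and an iso,
at a non-external node of `H`. -/
theorem deg_card_transport {Y : Hypergraph C tc} (ψ : HIso (replace G e H) Y)
    {v : H.V} (hv : ¬ IsExternal H v) (σ : ℕ) :
    Nat.card {f : Y.E // ∃ h : σ ∈ tc (Y.lab f), Y.att f σ h = ψ.vE (Quot.mk _ (Sum.inr v))}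
      = Nat.card {e'' : H.E // ∃ h : σ ∈ tc (H.lab e''), H.att e'' σ h = v} := by
  symm
  apply Nat.card_congr
  apply Equiv.ofBijective (f := fun x =>
    ⟨ψ.eE (Sum.inr x.1), by
      obtain ⟨h, hval⟩ := x.2
      have hlab : σ ∈ tc (Y.lab (ψ.eE (Sum.inr x.1))) := by
        exact (congrArg (fun c => σ ∈ tc c) (ψ.lab_eq _)).mpr h
      refine ⟨hlab, ?_⟩
      rw [ψ.att_eq (Sum.inr x.1) σ h hlab]
      show ψ.vE (Quot.mk _ (Sum.inr (H.att x.1 σ h))) = _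
      rw [hval]⟩)
  constructor
  · rintro ⟨e₁, h1⟩ ⟨e₂, h2⟩ hEq
    have := ψ.eE.injective (Subtype.mk_eq_mk.mp hEq)
    exact Subtype.ext (Sum.inr.inj this)
  · rintro ⟨f, hf, hfv⟩
    have hf' : f = ψ.eE (ψ.eE.symm f) := (Equiv.apply_symm_apply _ _).symm
    rcases hsplit : ψ.eE.symm f with (⟨g, hg⟩ | e'')
    · exfalso
      have hfe : f = ψ.eE (Sum.inl ⟨g, hg⟩) := by rw [← hsplit, ← hf']
      have hlab2 : σ ∈ tc ((replace G e H).lab (Sum.inl ⟨g, hg⟩)) := by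
        rw [← ψ.lab_eq (Sum.inl ⟨g, hg⟩), ← hfe]
        exact hf
      have hlabY : σ ∈ tc (Y.lab (ψ.eE (Sum.inl ⟨g, hg⟩))) := by
        exact (congrArg (fun c => σ ∈ tc c) (ψ.lab_eq _)).mpr hlab2
      have h4 : Y.att f σ hf
          = ψ.vE (Quot.mk _ (Sum.inl (G.att g σ hlab2))) := by
        rw [att_congr Y hfe σ hf hlabY]
        exact ψ.att_eq (Sum.inl ⟨g, hg⟩) σ hlab2 hlabY
      have h5 := ψ.vE.injective (hfv.symm.trans h4)
      exact glue_inr_ne_inl hv _ h5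
    · have hfe : f = ψ.eE (Sum.inr e'') := by rw [← hsplit, ← hf']
      have hlab2 : σ ∈ tc ((replace G e H).lab (Sum.inr e'')) := by
        rw [← ψ.lab_eq (Sum.inr e''), ← hfe]
        exact hf
      have hlabY : σ ∈ tc (Y.lab (ψ.eE (Sum.inr e''))) := by
        exact (congrArg (fun c => σ ∈ tc c) (ψ.lab_eq _)).mpr hlab2
      have h4 : Y.att f σ hf
          = ψ.vE (Quot.mk _ (Sum.inr (H.att e'' σ hlab2))) := by
        rw [att_congr Y hfe σ hf hlabY]
        exact ψ.att_eq (Sum.inr e'') σ hlab2 hlabY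
      have h2 := ψ.vE.injective (hfv.symm.trans h4)
      have h3 : H.att e'' σ hlab2 = v := by
        have := glue_inr_eq hv (x := Sum.inr (H.att e'' σ hlab2)) h2
        exact Sum.inr.inj this
      exact ⟨⟨e'', hlab2, h3⟩, Subtype.ext hfe.symm⟩

end Aux5
section Aux6

theorem SG_zero_ext (w : List C) :
    IsExternal (SG w : Hypergraph C tc) (show (SG w : Hypergraph C tc).V from (0 : Fin (w.length + 1))) :=
  ⟨1, by simp [SG], by simp [SG]⟩

theorem SG_last_ext (w : List C) :
    IsExternal (SG w : Hypergraph C tc) (Fin.last w.length) :=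
  ⟨2, by simp [SG], by simp [SG]⟩

theorem SG_att1 (w : List C) (j : Fin w.length)
    (h : (1:ℕ) ∈ tc ((SG w : Hypergraph C tc).lab j)) :
    (SG w : Hypergraph C tc).att j 1 h = j.castSucc := by
  show (if (1:ℕ) = 1 then j.castSucc else j.succ) = j.castSucc
  exact if_pos rfl

theorem SG_att2 (w : List C) (j : Fin w.length)
    (h : (2:ℕ) ∈ tc ((SG w : Hypergraph C tc).lab j)) :
    (SG w : Hypergraph C tc).att j 2 h = j.succ := by
  show (if (2:ℕ) = 1 then j.castSucc else j.succ) = j.succ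
  exact if_neg (by decide)

theorem SG_inDeg (w : List C)
    (hall : ∀ j : Fin w.length, (2:ℕ) ∈ tc ((SG w : Hypergraph C tc).lab j))
    (x : Fin (w.length + 1)) (hx : x ≠ 0) :
    inDeg (SG w : Hypergraph C tc) x = 1 := by
  show Nat.card {e : (SG w : Hypergraph C tc).E // ∃ h : 2 ∈ tc ((SG w : Hypergraph C tc).lab e), (SG w : Hypergraph C tc).att e 2 h = x} = 1
  rw [Nat.card_eq_one_iff_unique]
  have hxpos : 0 < x.val := by
    rcases Nat.eq_zero_or_pos x.val with h | h
    · exact absurd (Fin.ext h) hx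
    · exact h
  constructor
  · constructor
    rintro ⟨j1, hj1, he1⟩ ⟨j2, hj2, he2⟩
    rw [SG_att2 w j1 hj1] at he1
    rw [SG_att2 w j2 hj2] at he2
    exact Subtype.ext (Fin.succ_injective _ (he1.trans he2.symm))
  · have hm : x.val - 1 < w.length := by omega
    refine ⟨⟨⟨x.val - 1, hm⟩, hall _, ?_⟩⟩
    rw [SG_att2 w ⟨x.val - 1, hm⟩ (hall _)]
    apply Fin.ext
    show x.val - 1 + 1 = x.val
    omega

theorem SG_outDeg (w : List C)
    (hall : ∀ j : Fin w.length, (1:ℕ) ∈ tc ((SG w : Hypergraph C tc).lab j))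
    (x : Fin (w.length + 1)) (hx : x ≠ Fin.last w.length) :
    outDeg (SG w : Hypergraph C tc) x = 1 := by
  show Nat.card {e : (SG w : Hypergraph C tc).E // ∃ h : 1 ∈ tc ((SG w : Hypergraph C tc).lab e), (SG w : Hypergraph C tc).att e 1 h = x} = 1
  rw [Nat.card_eq_one_iff_unique]
  have hxlt : x.val < w.length := by
    rcases Nat.lt_or_ge x.val w.length with h | h
    · exact h
    · refine absurd (Fin.ext ?_) hx
      rw [Fin.val_last]
      have := x.isLt
      omega
  constructor
  · constructor
    rintro ⟨j1, hj1, he1⟩ ⟨j2, hj2, he2⟩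
    rw [SG_att1 w j1 hj1] at he1
    rw [SG_att1 w j2 hj2] at he2
    exact Subtype.ext (Fin.castSucc_injective _ (he1.trans he2.symm))
  · refine ⟨⟨⟨x.val, hxlt⟩, hall _, ?_⟩⟩
    rw [SG_att1 w ⟨x.val, hxlt⟩ (hall _)]
    exact Fin.ext rfl

end Aux6
section Aux7

theorem replace_bad_not_string {a : C} (hta : tc a = ({1, 2} : Finset ℕ))
    (G : Hypergraph C tc) (e : G.E) (H : Hypergraph C tc)
    (hothers : ∀ e' : G.E, e' ≠ e → G.lab e' = a)
    (hHlab : ∀ e'' : H.E, H.lab e'' = a)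
    (hbad : Bad H) :
    ¬ ∃ w : List C, IsIso (replace G e H) (SG w) := by
  rintro ⟨w, ⟨ψ⟩⟩
  have hreplab : ∀ e' : (replace G e H).E, (replace G e H).lab e' = a := by
    rintro (⟨e', he'⟩ | e'')
    · exact hothers e' he'
    · exact hHlab e''
  have hSGlab : ∀ j : Fin w.length, (SG w : Hypergraph C tc).lab j = a := by
    intro j
    have h1 := ψ.lab_eq (ψ.eE.symm j)
    have h1 := (congrArg (SG w : Hypergraph C tc).lab (ψ.eE.apply_symm_apply j)).symm.trans h1
    rw [h1]
    exact hreplab _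
  have h1mem : ∀ j : Fin w.length, (1:ℕ) ∈ tc ((SG w : Hypergraph C tc).lab j) := by
    intro j; rw [hSGlab j, hta]; simp
  have h2mem : ∀ j : Fin w.length, (2:ℕ) ∈ tc ((SG w : Hypergraph C tc).lab j) := by
    intro j; rw [hSGlab j, hta]; simp
  rcases hbad with ⟨v, hvext, hdeg⟩ | hcyc
  · -- bad node case
    have hxext : ¬ IsExternal (SG w : Hypergraph C tc)
        (ψ.vE (Quot.mk _ (Sum.inr v))) :=
      ψ.not_external (replace_not_external hvext)
    have hx0 : ψ.vE (Quot.mk _ (Sum.inr v))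
        ≠ (show (SG w : Hypergraph C tc).V from (0 : Fin (w.length + 1))) := by
      intro h
      exact hxext (h ▸ SG_zero_ext w)
    have hxl : ψ.vE (Quot.mk _ (Sum.inr v))
        ≠ (show (SG w : Hypergraph C tc).V from Fin.last w.length) := by
      intro h
      refine hxext (h ▸ SG_last_ext w)
    have hin : inDeg H v = 1 := by
      have h1 : inDeg (SG w : Hypergraph C tc) (ψ.vE (Quot.mk _ (Sum.inr v)))
          = inDeg H v := deg_card_transport ψ hvext 2
      rw [← h1]
      exact SG_inDeg w h2mem _ hx0
    have hout : outDeg H v = 1 := by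
      have h1 : outDeg (SG w : Hypergraph C tc) (ψ.vE (Quot.mk _ (Sum.inr v)))
          = outDeg H v := deg_card_transport ψ hvext 1
      rw [← h1]
      exact SG_outDeg w h1mem _ hxl
    rcases hdeg with h | h
    · exact h hin
    · exact h hout
  · -- cycle case
    obtain ⟨l, hl, v, eC, hvinj, heinj, hcyc⟩ := hcyc
    have hεinj : Function.Injective
        (fun i : Fin l => (ψ.eE (Sum.inr (eC i)) : Fin w.length)) := by
      intro i j hij
      exact heinj (Sum.inr.inj (ψ.eE.injective hij))
    have key : ∀ i : Fin l,
        ({(ψ.eE (Sum.inr (eC i)) : Fin w.length).castSucc,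
          (ψ.eE (Sum.inr (eC i)) : Fin w.length).succ} : Set (Fin (w.length + 1)))
        = {ψ.vE (Quot.mk _ (Sum.inr (v i))),
           ψ.vE (Quot.mk _ (Sum.inr (v ⟨(i.1 + 1) % l, Nat.mod_lt _ hl⟩)))} := by
      intro i
      obtain ⟨h₁, h₂, hset⟩ := hcyc i
      have hh₁ : 1 ∈ tc ((replace G e H).lab (Sum.inr (eC i))) := h₁
      have hh₂ : 2 ∈ tc ((replace G e H).lab (Sum.inr (eC i))) := h₂
      have hY1 : 1 ∈ tc ((SG w : Hypergraph C tc).lab (ψ.eE (Sum.inr (eC i)))) := by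
        exact (congrArg (fun c => 1 ∈ tc c) (ψ.lab_eq _)).mpr hh₁
      have hY2 : 2 ∈ tc ((SG w : Hypergraph C tc).lab (ψ.eE (Sum.inr (eC i)))) := by
        exact (congrArg (fun c => 2 ∈ tc c) (ψ.lab_eq _)).mpr hh₂
      have e1 : ((ψ.eE (Sum.inr (eC i)) : Fin w.length)).castSucc
          = ψ.vE (Quot.mk _ (Sum.inr (H.att (eC i) 1 h₁))) := by
        rw [← SG_att1 w _ hY1]
        exact ψ.att_eq (Sum.inr (eC i)) 1 hh₁ hY1
      have e2 : ((ψ.eE (Sum.inr (eC i)) : Fin w.length)).succ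
          = ψ.vE (Quot.mk _ (Sum.inr (H.att (eC i) 2 h₂))) := by
        rw [← SG_att2 w _ hY2]
        exact ψ.att_eq (Sum.inr (eC i)) 2 hh₂ hY2
      rw [e1, e2]
      have himg := congrArg
        (Set.image (fun z : H.V => ψ.vE (Quot.mk _ (Sum.inr z)))) hset
      rw [Set.image_pair, Set.image_pair] at himg
      exact himg
    by_cases hl1 : l = 1
    · subst hl1
      have hidx : (⟨((⟨0, hl⟩ : Fin 1).1 + 1) % 1, Nat.mod_lt _ hl⟩ : Fin 1) = ⟨0, hl⟩ := Fin.ext (by simp)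
      have hk := key ⟨0, hl⟩
      replace hk := hk.trans ((congrArg (fun z => ({ψ.vE (Quot.mk _ (Sum.inr (v ⟨0, hl⟩))), ψ.vE (Quot.mk _ (Sum.inr z))} : Set (Fin (w.length + 1)))) (congrArg v hidx)).trans (Set.pair_eq_singleton _))
      have hc : (ψ.eE (Sum.inr (eC ⟨0, hl⟩)) : Fin w.length).castSucc
          = (ψ.eE (Sum.inr (eC ⟨0, hl⟩)) : Fin w.length).succ := by
        have m1 : (ψ.eE (Sum.inr (eC ⟨0, hl⟩)) : Fin w.length).castSucc
            ∈ ({ψ.vE (Quot.mk _ (Sum.inr (v ⟨0, hl⟩)))} : Set (Fin (w.length + 1))) := by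
          exact hk.subset (Set.mem_insert _ _)
        have m2 : (ψ.eE (Sum.inr (eC ⟨0, hl⟩)) : Fin w.length).succ
            ∈ ({ψ.vE (Quot.mk _ (Sum.inr (v ⟨0, hl⟩)))} : Set (Fin (w.length + 1))) := by
          exact hk.subset (Set.mem_insert_iff.mpr (Or.inr rfl))
        replace m1 := Set.mem_singleton_iff.mp m1; replace m2 := Set.mem_singleton_iff.mp m2
        exact m1.trans m2.symm
      have := congrArg Fin.val hc
      replace this : (ψ.eE (Sum.inr (eC ⟨0, hl⟩)) : Fin w.length).val = (ψ.eE (Sum.inr (eC ⟨0, hl⟩)) : Fin w.length).val + 1 := this; omega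
    · have hl2 : 2 ≤ l := by omega
      haveI : Nonempty (Fin l) := ⟨⟨0, hl⟩⟩
      obtain ⟨i₀, hmax⟩ := Finite.exists_max
        (fun i : Fin l => (ψ.eE (Sum.inr (eC i)) : Fin w.length).val)
      -- find t with W t = succ (ε i₀)
      have hsuccmem : (ψ.eE (Sum.inr (eC i₀)) : Fin w.length).succ
          ∈ ({ψ.vE (Quot.mk _ (Sum.inr (v i₀))),
              ψ.vE (Quot.mk _ (Sum.inr (v ⟨(i₀.1 + 1) % l, Nat.mod_lt _ hl⟩)))} :
            Set (Fin (w.length + 1))) := by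
        rw [← key i₀]; exact Set.mem_insert_iff.mpr (Or.inr rfl)
      obtain ⟨t, hWt⟩ : ∃ t : Fin l, ψ.vE (Quot.mk _ (Sum.inr (v t)))
          = (ψ.eE (Sum.inr (eC i₀)) : Fin w.length).succ := by
        rcases Set.mem_insert_iff.mp hsuccmem with h | h
        · exact ⟨i₀, h.symm⟩
        · exact ⟨_, (Set.mem_singleton_iff.mp h).symm⟩
      have claim : ∀ j : Fin l, ψ.vE (Quot.mk _ (Sum.inr (v t)))
          ∈ ({(ψ.eE (Sum.inr (eC j)) : Fin w.length).castSucc,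
              (ψ.eE (Sum.inr (eC j)) : Fin w.length).succ} : Set (Fin (w.length + 1)))
          → j = i₀ := by
        intro j hj
        rcases Set.mem_insert_iff.mp hj with h | h
        · exfalso
          have hv2 := congrArg Fin.val (h.symm.trans hWt)
          replace hv2 : (ψ.eE (Sum.inr (eC j)) : Fin w.length).val = (ψ.eE (Sum.inr (eC i₀)) : Fin w.length).val + 1 := hv2
          have := hmax j
          omega
        · replace h := Set.mem_singleton_iff.mp h
          have := Fin.succ_injective _ (h.symm.trans hWt)
          exact hεinj this
      have ht : t = i₀ := by
        apply claim t
        rw [key t]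
        exact Set.mem_insert _ _
      set pt : Fin l := ⟨(t.1 + l - 1) % l, Nat.mod_lt _ hl⟩ with hpt
      have hnxt : (⟨(pt.1 + 1) % l, Nat.mod_lt _ hl⟩ : Fin l) = t := by
        apply Fin.ext
        show ((t.1 + l - 1) % l + 1) % l = t.1
        rw [Nat.mod_add_mod]
        have h1 : t.1 + l - 1 + 1 = t.1 + l := by omega
        rw [h1, Nat.add_mod_right, Nat.mod_eq_of_lt t.isLt]
      have hptne : pt ≠ t := by
        intro hEq
        have hv2 : (t.1 + l - 1) % l = t.1 := congrArg Fin.val hEq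
        rcases Nat.eq_zero_or_pos t.1 with h0 | hpos
        · rw [h0] at hv2
          have h3 : 0 + l - 1 = l - 1 := by omega
          rw [h3, Nat.mod_eq_of_lt (by omega)] at hv2
          omega
        · have h3 : t.1 + l - 1 = (t.1 - 1) + l := by omega
          rw [h3, Nat.add_mod_right, Nat.mod_eq_of_lt (by omega)] at hv2
          omega
      have hp : pt = i₀ := by
        apply claim pt
        rw [key pt, hnxt]
        exact Set.mem_insert_iff.mpr (Or.inr rfl)
      exact hptne (hp.trans ht.symm)

end Aux7
/-- If some hypergraph `G` with exactly one `A`-labeled hyperedge `e` and all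
other hyperedges labeled `a` is derivable in `Γ`, and from `A` one can derive an `a`-labeled
hypergraph `H` having a bad node or an undirected cycle, then `G[e/H]` belongs to `L(Γ)` and
is not a string graph; in particular `Γ` is not string-generating. -/
theorem stmt_13 (C : Type) (tc : C → Finset ℕ) (Γ : HRG C tc) (a : C)
    (hta : tc a = ({1, 2} : Finset ℕ)) (haT : ¬ Γ.isNT a)
    (hterm : ∀ c : C, ¬ Γ.isNT c → c = a)
    (A : C) (hA : Γ.isNT A)
    (G : Hypergraph C tc) (hG : Derives Γ (handle Γ.S) G)
    (e : G.E) (heA : G.lab e = A) (hothers : ∀ e' : G.E, e' ≠ e → G.lab e' = a)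
    (H : Hypergraph C tc) (hH : Derives Γ (handle A) H)
    (hHlab : ∀ e' : H.E, H.lab e' = a) (hHt : H.extType = tc A)
    (hbad : Bad H) :
    replace G e H ∈ Lang Γ ∧
    (¬ ∃ w : List C, IsIso (replace G e H) (SG w)) ∧
    ¬ IsStringGenerating Γ := by
  have hreplab : ∀ e' : (replace G e H).E, (replace G e H).lab e' = a := by
    rintro (⟨e', he'⟩ | e'')
    · exact hothers e' he'
    · exact hHlab e''
  obtain ⟨K, hGK, hiso⟩ := derive_replace Γ hH G e heA
  have hmem : replace G e H ∈ Lang Γ :=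
    ⟨fun e' hnt => haT (hreplab e' ▸ hnt), K, hG.trans hGK, hiso⟩
  have hnstr : ¬ ∃ w : List C, IsIso (replace G e H) (SG w) :=
    replace_bad_not_string hta G e H hothers hHlab hbad
  exact ⟨hmem, hnstr, fun hsg => hnstr (hsg _ hmem)⟩

end HRGPaper
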